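/- Let E be an elliptic curve over a field K with char(K) ≠ 3 and P ∈ E(K). Suppose R₁, R₂, R₃ are three points on E (over an algebraic closure of K) with 3Rᵢ = P for each i, whose x-coordinates are the roots of an irreducible cubic factor f of the degree-9 polynomial whose roots are the x-coordinates of the preimages of P under multiplication by 3, and suppose every element of Gal(L/K) (L the splitting field of f) permutes {R₁, R₂, R₃}. Then R₁ + R₂ + R₃ − P is a K-rational 3-torsion point of E. -/

import Mathlib

open WeierstrassCurve WeierstrassCurve.Affine Polynomial

universe u

open scoped Classical in
/-- A model of an isogeny defined over `K` between elliptic curves given by Weierstrass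
models `E` and `E'` over `K`, of degree `d`: a compatible family of group homomorphisms on
points over every field extension of `K`, whose kernel over any algebraically closed
extension of `K` is finite of cardinality `d`. -/
structure KIsogeny (K : Type u) [Field K] (E E' : WeierstrassCurve K) (d : ℕ) where
  hom : ∀ (L : Type u) [Field L] [Algebra K L], Affine.Point (Affine.baseChange E L) →+ Affine.Point (Affine.baseChange E' L)
  compat : ∀ (L : Type u) [Field L] [Algebra K L] (M : Type u) [Field M] [Algebra K M]
    (f : L →ₐ[K] M) (P : Affine.Point (Affine.baseChange E L)),
      hom M (Point.map (W' := E) f P) = Point.map (W' := E') f (hom L P)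
  card_ker : ∀ (L : Type u) [Field L] [Algebra K L] [IsAlgClosed L],
      Nat.card (AddMonoidHom.ker (hom L)) = d

private lemma sum_perm_aux {G : Type*} [AddCommGroup G] {a b c r s t : G}
    (ha : a = r ∨ a = s ∨ a = t) (hb : b = r ∨ b = s ∨ b = t) (hc : c = r ∨ c = s ∨ c = t)
    (hab : a ≠ b) (hac : a ≠ c) (hbc : b ≠ c) : a + b + c = r + s + t := by
  rcases ha with rfl | rfl | rfl <;> rcases hb with rfl | rfl | rfl <;>
    rcases hc with rfl | rfl | rfl <;>
    first
      | exact absurd rfl hab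
      | exact absurd rfl hac
      | exact absurd rfl hbc
      | abel

private lemma sep_aux {K : Type u} [Field K] (hchar3 : ringChar K ≠ 3) {f : K[X]}
    (hirr : Irreducible f) (hdeg : f.natDegree = 3) : f.Separable := by
  rw [Polynomial.separable_iff_derivative_ne_zero hirr]
  have h3 : (3 : K) ≠ 0 := by
    intro h
    have := (CharP.cast_eq_zero_iff K (ringChar K) 3).mp (by exact_mod_cast h)
    rcases (Nat.dvd_prime Nat.prime_three).mp this with h1 | h1
    · exact CharP.ringChar_ne_one h1
    · exact hchar3 h1
  intro hd
  have := Polynomial.coeff_derivative f 2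
  rw [hd] at this
  simp at this
  rcases this with h | h
  · have : f.leadingCoeff ≠ 0 := Polynomial.leadingCoeff_ne_zero.mpr hirr.ne_zero
    rw [Polynomial.leadingCoeff, hdeg] at this
    exact this h
  · norm_num at h
    exact h3 h

private lemma descent_aux {K : Type u} [Field K] {f : K[X]} (hsep : f.Separable)
    (x : f.SplittingField)
    (hfix : ∀ σ : f.SplittingField ≃ₐ[K] f.SplittingField, σ x = x) :
    ∃ xK : K, algebraMap K f.SplittingField xK = x := by
  haveI : IsGalois K f.SplittingField := IsGalois.of_separable_splitting_field hsep
  have hbot : IntermediateField.fixedField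
      (⊤ : Subgroup (f.SplittingField ≃ₐ[K] f.SplittingField)) = ⊥ :=
    OrderIso.map_bot
      (@IsGalois.intermediateFieldEquivSubgroup K _ f.SplittingField _ _ _ inferInstance).symm
  have hx : x ∈ IntermediateField.fixedField
      (⊤ : Subgroup (f.SplittingField ≃ₐ[K] f.SplittingField)) := fun g => hfix g
  rw [hbot, IntermediateField.mem_bot] at hx
  exact hx

open scoped Classical in
/-- If `3Rᵢ = P` for three points whose `x`-coordinates are the roots of an irreducible cubic
factor of the `3`-division polynomial of `P`, and the Galois group of the splitting field
permutes `{R₁, R₂, R₃}`, then `R₁ + R₂ + R₃ − P` is a `K`-rational `3`-torsion point. -/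
theorem stmt5 (K : Type u) [Field K] (hchar3 : ringChar K ≠ 3)
    (E : WeierstrassCurve K) [E.IsElliptic]
    (xP yP : K) (hP : (E.baseChange K).toAffine.Nonsingular xP yP)
    (P : Affine.Point (Affine.baseChange E K)) (hPeq : P = Point.some _ _ hP)
    (f : K[X]) (hirr : Irreducible f) (hdeg : f.natDegree = 3)
    (hdvd : f ∣ E.Φ 3 - C xP * E.ΨSq 3)
    (x₁ x₂ x₃ y₁ y₂ y₃ : f.SplittingField)
    (h₁ : (E.baseChange f.SplittingField).toAffine.Nonsingular x₁ y₁)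
    (h₂ : (E.baseChange f.SplittingField).toAffine.Nonsingular x₂ y₂)
    (h₃ : (E.baseChange f.SplittingField).toAffine.Nonsingular x₃ y₃)
    (R₁ R₂ R₃ : Affine.Point (Affine.baseChange E f.SplittingField))
    (hR₁ : R₁ = Point.some _ _ h₁) (hR₂ : R₂ = Point.some _ _ h₂) (hR₃ : R₃ = Point.some _ _ h₃)
    (hroot₁ : aeval x₁ f = 0) (hroot₂ : aeval x₂ f = 0) (hroot₃ : aeval x₃ f = 0)
    (hne₁₂ : x₁ ≠ x₂) (hne₁₃ : x₁ ≠ x₃) (hne₂₃ : x₂ ≠ x₃)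
    (h3R₁ : 3 • R₁ = Point.baseChange (W' := E) K f.SplittingField P)
    (h3R₂ : 3 • R₂ = Point.baseChange (W' := E) K f.SplittingField P)
    (h3R₃ : 3 • R₃ = Point.baseChange (W' := E) K f.SplittingField P)
    (hperm : ∀ σ : f.SplittingField ≃ₐ[K] f.SplittingField,
      ∀ R ∈ ({R₁, R₂, R₃} : Set (Affine.Point (Affine.baseChange E f.SplittingField))),
        Point.map (W' := E) σ.toAlgHom R ∈ ({R₁, R₂, R₃} : Set (Affine.Point (Affine.baseChange E f.SplittingField)))) :
    ∃ T : Affine.Point (Affine.baseChange E K), 3 • T = 0 ∧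
      Point.baseChange (W' := E) K f.SplittingField T =
        R₁ + R₂ + R₃ - Point.baseChange (W' := E) K f.SplittingField P := by
  have hsep : f.Separable := sep_aux hchar3 hirr hdeg
  set L := f.SplittingField with hL
  -- distinctness of the points
  have hRne₁₂ : R₁ ≠ R₂ := by
    rw [hR₁, hR₂]; intro h; exact hne₁₂ (Point.some.inj h).1
  have hRne₁₃ : R₁ ≠ R₃ := by
    rw [hR₁, hR₃]; intro h; exact hne₁₃ (Point.some.inj h).1
  have hRne₂₃ : R₂ ≠ R₃ := by
    rw [hR₂, hR₃]; intro h; exact hne₂₃ (Point.some.inj h).1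
  set S : Affine.Point (Affine.baseChange E L) := R₁ + R₂ + R₃ - Point.baseChange (W' := E) K L P with hSdef
  have h3S : 3 • S = 0 := by
    have e : 3 • S = 3 • R₁ + 3 • R₂ + 3 • R₃ - 3 • Point.baseChange (W' := E) K L P := by
      rw [hSdef]; abel
    rw [e, h3R₁, h3R₂, h3R₃]; abel
  have hfixS : ∀ σ : L ≃ₐ[K] L, Point.map (W' := E) σ.toAlgHom S = S := by
    intro σ
    have hP' : Point.map (W' := E) σ.toAlgHom (Point.baseChange (W' := E) K L P) = Point.baseChange (W' := E) K L P :=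
      Point.map_baseChange (W' := E) σ.toAlgHom P
    rw [hSdef, map_sub, map_add, map_add, hP']
    congr 1
    have inj := Point.map_injective (W' := E) σ.toAlgHom
    exact sum_perm_aux
      (by simpa using hperm σ R₁ (by simp))
      (by simpa using hperm σ R₂ (by simp))
      (by simpa using hperm σ R₃ (by simp))
      (inj.ne hRne₁₂) (inj.ne hRne₁₃) (inj.ne hRne₂₃)
  rcases hc : S with _ | @⟨x, y, hxy⟩
  · exact ⟨0, by simp, by rw [map_zero]; rfl⟩
  · have hfx : ∀ σ : L ≃ₐ[K] L, σ x = x ∧ σ y = y := by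
      intro σ
      have h := hfixS σ
      rw [hc, Point.map_some] at h
      exact ⟨(Point.some.inj h).1, (Point.some.inj h).2⟩
    obtain ⟨xK, hxK⟩ := descent_aux hsep x fun σ => (hfx σ).1
    obtain ⟨yK, hyK⟩ := descent_aux hsep y fun σ => (hfx σ).2
    subst hxK hyK
    have hKns : (E.baseChange K).toAffine.Nonsingular xK yK :=
      (Affine.baseChange_nonsingular (W := E) (f := Algebra.ofId K L) (algebraMap K L).injective xK yK).mp hxy
    have hT : Point.baseChange (W' := E) K L (Point.some _ _ hKns) = Point.some _ _ hxy := by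
      rw [Point.map_some]; rfl
    refine ⟨Point.some _ _ hKns, ?_, by rw [hT, ← hc]⟩
    have h0 : Point.baseChange (W' := E) K L (3 • Point.some _ _ hKns) = Point.baseChange (W' := E) K L 0 := by
      rw [map_nsmul, hT, map_zero, ← hc, h3S]
    exact Point.map_injective (W' := E) (Algebra.ofId K L) h0
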